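/- For any density matrix ρ and any orthogonal projection Π, F(ΠρΠ, σ) = F(ρ, σ) whenever Π is the projection onto the image (support) of σ. -/

import Mathlib

open Matrix Kronecker BigOperators
open scoped ComplexOrder

noncomputable section

namespace QCAE

variable {α β γ n : Type*}

open scoped Classical

/-- Matrix square root of a positive semidefinite matrix (junk value `0` otherwise). -/
noncomputable def msqrt [Fintype n] [DecidableEq n] (A : Matrix n n ℂ) : Matrix n n ℂ :=
  if h : A.PosSemidef then
    (h.1.eigenvectorUnitary : Matrix n n ℂ) * diagonal ((↑) ∘ Real.sqrt ∘ h.1.eigenvalues) *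
      star (h.1.eigenvectorUnitary : Matrix n n ℂ) else 0

/-- Trace norm `‖A‖₁ = Tr √(AᴴA)`. -/
noncomputable def traceNorm [Fintype n] [DecidableEq n] (A : Matrix n n ℂ) : ℝ :=
  (msqrt (Aᴴ * A)).trace.re

/-- Fidelity `F(ρ,σ) = (Tr √(√ρ σ √ρ))²`. -/
noncomputable def fidelity [Fintype n] [DecidableEq n] (ρ σ : Matrix n n ℂ) : ℝ :=
  ((msqrt (msqrt ρ * σ * msqrt ρ)).trace.re) ^ 2

/-- A density matrix: positive semidefinite with trace one. -/
def IsDensity [Fintype n] [DecidableEq n] (ρ : Matrix n n ℂ) : Prop :=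
  ρ.PosSemidef ∧ ρ.trace = 1

/-- Sum of the `r` largest values of `v`. -/
noncomputable def sumLargest [Fintype n] (v : n → ℝ) (r : ℕ) : ℝ :=
  ((((Finset.univ : Finset n).val.map v).sort (· ≤ ·)).reverse.take r).sum

/-- Partial trace over the first tensor factor. -/
def ptraceFst [Fintype α] (M : Matrix (α × β) (α × β) ℂ) : Matrix β β ℂ :=
  fun i j => ∑ k, M (k, i) (k, j)

/-- Partial trace over the second tensor factor. -/
def ptraceSnd [Fintype β] (M : Matrix (α × β) (α × β) ℂ) : Matrix α α ℂ :=
  fun i j => ∑ k, M (i, k) (j, k)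

/-- Apply a map to the first tensor factor (`𝓔 ⊗ id`). -/
def applyFst (𝓔 : Matrix α α ℂ → Matrix β β ℂ) (M : Matrix (α × γ) (α × γ) ℂ) :
    Matrix (β × γ) (β × γ) ℂ :=
  fun p q => 𝓔 (fun a b => M (a, p.2) (b, q.2)) p.1 q.1

/-- Apply a map to the second tensor factor (`id ⊗ 𝓔`). -/
def applySnd (𝓔 : Matrix α α ℂ → Matrix β β ℂ) (M : Matrix (γ × α) (γ × α) ℂ) :
    Matrix (γ × β) (γ × β) ℂ :=
  fun p q => 𝓔 (fun a b => M (p.1, a) (q.1, b)) p.2 q.2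

/-- Complete positivity: `id_N ⊗ 𝓔` preserves positive semidefiniteness for all `N`. -/
def IsCP [Fintype α] [DecidableEq α] [Fintype β] [DecidableEq β]
    (𝓔 : Matrix α α ℂ → Matrix β β ℂ) : Prop :=
  ∀ (N : ℕ) (M : Matrix (Fin N × α) (Fin N × α) ℂ), M.PosSemidef → (applySnd 𝓔 M).PosSemidef

/-- Trace preservation. -/
def TracePreserving [Fintype α] [Fintype β] (𝓔 : Matrix α α ℂ → Matrix β β ℂ) : Prop :=
  ∀ M, (𝓔 M).trace = M.trace

/-- A quantum channel: a completely positive trace-preserving linear map. -/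
def IsChannel [Fintype α] [DecidableEq α] [Fintype β] [DecidableEq β]
    (𝓔 : Matrix α α ℂ →ₗ[ℂ] Matrix β β ℂ) : Prop :=
  IsCP (𝓔 ·) ∧ TracePreserving (𝓔 ·)

/-- The Choi state `J^𝓔 = (1/dim α) Σ_{i,j} |i⟩⟨j| ⊗ 𝓔(|i⟩⟨j|)` of a map. -/
noncomputable def choi [Fintype α] [DecidableEq α] (𝓔 : Matrix α α ℂ → Matrix β β ℂ) :
    Matrix (α × β) (α × β) ℂ :=
  ((Fintype.card α : ℂ))⁻¹ • ∑ i : α, ∑ j : α,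
    (Matrix.single i j (1 : ℂ)) ⊗ₖ 𝓔 (Matrix.single i j (1 : ℂ))

/-- The maximally entangled state `φ⁺ = (1/d) Σ_{i,j} |ii⟩⟨jj|`. -/
def phiPlus (d : ℕ) : Matrix (Fin d × Fin d) (Fin d × Fin d) ℂ :=
  fun p q => if p.1 = p.2 ∧ q.1 = q.2 then ((d : ℂ))⁻¹ else 0


/-- The square root of a PSD matrix (the former Mathlib definition). -/
noncomputable def _root_.Matrix.PosSemidef.sqrt {n : Type*} [Fintype n] [DecidableEq n]
    {A : Matrix n n ℂ} (h : A.PosSemidef) : Matrix n n ℂ :=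
  (h.1.eigenvectorUnitary : Matrix n n ℂ) * diagonal ((↑) ∘ Real.sqrt ∘ h.1.eigenvalues) *
    star (h.1.eigenvectorUnitary : Matrix n n ℂ)

lemma _root_.Matrix.PosSemidef.posSemidef_sqrt {n : Type*} [Fintype n] [DecidableEq n]
    {A : Matrix n n ℂ} (h : A.PosSemidef) : h.sqrt.PosSemidef := by
  have hd : (diagonal ((↑) ∘ Real.sqrt ∘ h.1.eigenvalues : n → ℂ)).PosSemidef :=
    Matrix.PosSemidef.diagonal (fun i => by
      show (0 : ℂ) ≤ ((Real.sqrt (h.1.eigenvalues i) : ℝ) : ℂ)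
      exact_mod_cast Real.sqrt_nonneg _)
  unfold Matrix.PosSemidef.sqrt
  rw [Matrix.star_eq_conjTranspose]
  exact hd.mul_mul_conjTranspose_same _

lemma _root_.Matrix.PosSemidef.sqrt_mul_self {n : Type*} [Fintype n] [DecidableEq n]
    {A : Matrix n n ℂ} (h : A.PosSemidef) : h.sqrt * h.sqrt = A := by
  have hU := h.1.eigenvectorUnitary.2
  have h1 : star (h.1.eigenvectorUnitary : Matrix n n ℂ) *
      (h.1.eigenvectorUnitary : Matrix n n ℂ) = 1 :=
    Unitary.star_mul_self_of_mem hU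
  conv_rhs => rw [h.1.spectral_theorem, Unitary.conjStarAlgAut_apply]
  unfold Matrix.PosSemidef.sqrt
  simp only [Matrix.mul_assoc]
  rw [← Matrix.mul_assoc (star _) _ (diagonal _ * _), h1, Matrix.one_mul,
    ← Matrix.mul_assoc (diagonal _) (diagonal _), diagonal_mul_diagonal]
  congr 3
  funext i
  simp only [Function.comp_apply]
  rw [← Complex.ofReal_mul, Real.mul_self_sqrt (h.eigenvalues_nonneg i)]
  rfl

section Aux

open Polynomial

variable {m' : Type*} [Fintype m'] [DecidableEq m']

/-- Conjugation by a unitary as an `ℝ`-algebra homomorphism. -/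
def conjAlgHom (U : Matrix m' m' ℂ) (h1 : star U * U = 1) (h2 : U * star U = 1) :
    Matrix m' m' ℂ →ₐ[ℝ] Matrix m' m' ℂ where
  toFun A := U * A * star U
  map_one' := by
    show U * 1 * star U = 1
    rw [mul_one, h2]
  map_mul' A B := by
    have h : star U * (U * (B * star U)) = B * star U := by
      rw [← Matrix.mul_assoc, ← Matrix.mul_assoc, h1, Matrix.one_mul]
    simp only [Matrix.mul_assoc, h]
  map_zero' := by simp
  map_add' A B := by
    simp only [Matrix.mul_add, Matrix.add_mul]
  commutes' r := by
    rw [Algebra.algebraMap_eq_smul_one]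
    show U * (r • 1) * star U = r • 1
    rw [Matrix.mul_smul, Matrix.smul_mul, mul_one, h2]

lemma aeval_conj_unitary (U D : Matrix m' m' ℂ) (h1 : star U * U = 1) (h2 : U * star U = 1)
    (p : ℝ[X]) :
    aeval (U * D * star U) p = U * aeval D p * star U :=
  aeval_algHom_apply (conjAlgHom U h1 h2) D p

lemma aeval_pi (d : m' → ℂ) (p : ℝ[X]) (i : m') :
    aeval d p i = aeval (d i) p :=
  (aeval_algHom_apply (Pi.evalAlgHom ℝ (fun _ : m' => ℂ) i) d p).symm

lemma aeval_ofReal (r : ℝ) (p : ℝ[X]) :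
    aeval ((r : ℂ)) p = ((p.eval r : ℝ) : ℂ) := by
  exact Polynomial.aeval_algebraMap_apply_eq_algebraMap_eval (A := ℂ) r p

lemma aeval_diagonal (d : m' → ℂ) (p : ℝ[X]) :
    aeval (Matrix.diagonal d) p = Matrix.diagonal (fun i => aeval (d i) p) := by
  have := aeval_algHom_apply (Matrix.diagonalAlgHom (n := m') (α := ℂ) ℝ) d p
  exact this.trans (congrArg Matrix.diagonal (funext fun i => aeval_pi d p i))

/-- The PSD square root is given by any real polynomial that interpolates `Real.sqrt`
on the eigenvalues. -/
lemma sqrt_eq_aeval {A : Matrix m' m' ℂ} (hA : A.PosSemidef) (p : ℝ[X])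
    (hp : ∀ i, p.eval (hA.1.eigenvalues i) = Real.sqrt (hA.1.eigenvalues i)) :
    hA.sqrt = aeval A p := by
  have hU := hA.1.eigenvectorUnitary.2
  have h1 : star (hA.1.eigenvectorUnitary : Matrix m' m' ℂ) *
      (hA.1.eigenvectorUnitary : Matrix m' m' ℂ) = 1 :=
    Unitary.star_mul_self_of_mem hU
  have h2 : (hA.1.eigenvectorUnitary : Matrix m' m' ℂ) *
      star (hA.1.eigenvectorUnitary : Matrix m' m' ℂ) = 1 :=
    Unitary.mul_star_self_of_mem hU
  conv_rhs => rw [hA.1.spectral_theorem, Unitary.conjStarAlgAut_apply]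
  rw [aeval_conj_unitary _ _ h1 h2, aeval_diagonal]
  rw [Matrix.PosSemidef.sqrt]
  refine congrArg₂ _ (congrArg₂ _ rfl (congrArg Matrix.diagonal (funext fun i => ?_))) rfl
  simp only [Function.comp_apply]
  rw [show ((RCLike.ofReal (hA.1.eigenvalues i)) : ℂ) = ((hA.1.eigenvalues i : ℝ) : ℂ) from rfl,
    aeval_ofReal, hp i]

lemma trace_pow_mul_comm (A B : Matrix m' m' ℂ) (k : ℕ) :
    ((A * B) ^ (k + 1)).trace = ((B * A) ^ (k + 1)).trace := by
  have key : ∀ j : ℕ, (A * B) ^ (j + 1) = A * ((B * A) ^ j * B) := by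
    intro j
    induction j with
    | zero => simp
    | succ j ih =>
      rw [pow_succ, ih, pow_succ]
      simp only [Matrix.mul_assoc]
  rw [key k, Matrix.trace_mul_comm, pow_succ]
  simp only [Matrix.mul_assoc]

lemma trace_aeval_mul_comm (A B : Matrix m' m' ℂ) (p : ℝ[X]) (h0 : p.coeff 0 = 0) :
    (aeval (A * B) p).trace = (aeval (B * A) p).trace := by
  rw [aeval_eq_sum_range (p := p) (A * B), aeval_eq_sum_range (p := p) (B * A),
    Matrix.trace_sum, Matrix.trace_sum]
  refine Finset.sum_congr rfl fun i _ => ?_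
  rw [Matrix.trace_smul, Matrix.trace_smul]
  cases i with
  | zero => rw [h0]; simp
  | succ k => rw [trace_pow_mul_comm A B k]

/-- `Tr √(XᴴX) = Tr √(XXᴴ)`. -/
lemma trace_msqrt_conjTranspose_comm (X : Matrix m' m' ℂ) :
    (msqrt (Xᴴ * X)).trace = (msqrt (X * Xᴴ)).trace := by
  have h1 := Matrix.posSemidef_conjTranspose_mul_self X
  have h2 := Matrix.posSemidef_self_mul_conjTranspose X
  set s : Finset ℝ := insert 0
    ((Finset.univ.image h1.1.eigenvalues) ∪ (Finset.univ.image h2.1.eigenvalues)) with hs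
  set p : ℝ[X] := Lagrange.interpolate s id Real.sqrt with hpdef
  have hps : ∀ x ∈ s, p.eval x = Real.sqrt x := by
    intro x hx
    exact Lagrange.eval_interpolate_at_node Real.sqrt (Set.injOn_id _) hx
  have h0 : p.coeff 0 = 0 := by
    rw [coeff_zero_eq_eval_zero, hps 0 (Finset.mem_insert_self _ _), Real.sqrt_zero]
  rw [msqrt, dif_pos h1, msqrt, dif_pos h2]
  change h1.sqrt.trace = h2.sqrt.trace
  rw [sqrt_eq_aeval h1 p (fun i => hps _ (by
    simp only [hs, Finset.mem_insert, Finset.mem_union, Finset.mem_image]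
    exact Or.inr (Or.inl ⟨i, Finset.mem_univ i, rfl⟩)))]
  rw [sqrt_eq_aeval h2 p (fun i => hps _ (by
    simp only [hs, Finset.mem_insert, Finset.mem_union, Finset.mem_image]
    exact Or.inr (Or.inr ⟨i, Finset.mem_univ i, rfl⟩)))]
  exact trace_aeval_mul_comm Xᴴ X p h0

/-- Symmetry of the sandwiched trace: `Tr √(√A B √A) = Tr √(√B A √B)`. -/
lemma trace_msqrt_sandwich_comm {A B : Matrix m' m' ℂ}
    (hA : A.PosSemidef) (hB : B.PosSemidef) :
    (msqrt (msqrt A * B * msqrt A)).trace = (msqrt (msqrt B * A * msqrt B)).trace := by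
  have hmA : msqrt A = hA.sqrt := dif_pos hA
  have hmB : msqrt B = hB.sqrt := dif_pos hB
  have hBs : hB.sqrt * hB.sqrt = B := hB.sqrt_mul_self
  have hAs : hA.sqrt * hA.sqrt = A := hA.sqrt_mul_self
  have e1 : msqrt A * B * msqrt A = (hB.sqrt * hA.sqrt)ᴴ * (hB.sqrt * hA.sqrt) := by
    rw [hmA, Matrix.conjTranspose_mul, hA.posSemidef_sqrt.1.eq, hB.posSemidef_sqrt.1.eq]
    simp only [Matrix.mul_assoc]
    rw [← Matrix.mul_assoc hB.sqrt hB.sqrt, hBs]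
  have e2 : msqrt B * A * msqrt B = (hB.sqrt * hA.sqrt) * (hB.sqrt * hA.sqrt)ᴴ := by
    rw [hmB, Matrix.conjTranspose_mul, hA.posSemidef_sqrt.1.eq, hB.posSemidef_sqrt.1.eq]
    simp only [Matrix.mul_assoc]
    rw [← Matrix.mul_assoc hA.sqrt hA.sqrt, hAs]
  rw [e1, e2]
  exact trace_msqrt_conjTranspose_comm (hB.sqrt * hA.sqrt)

/-- The square root of a PSD matrix factors through the matrix itself. -/
lemma sqrt_eq_mul {A : Matrix m' m' ℂ} (hA : A.PosSemidef) :
    ∃ T : Matrix m' m' ℂ, hA.sqrt = A * T := by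
  set s : Finset ℝ := insert 0 (Finset.univ.image hA.1.eigenvalues) with hs
  set p : ℝ[X] := Lagrange.interpolate s id Real.sqrt with hpdef
  have hps : ∀ x ∈ s, p.eval x = Real.sqrt x := fun x hx =>
    Lagrange.eval_interpolate_at_node Real.sqrt (Set.injOn_id _) hx
  have h0 : p.coeff 0 = 0 := by
    rw [coeff_zero_eq_eval_zero, hps 0 (Finset.mem_insert_self _ _), Real.sqrt_zero]
  have hA' : hA.sqrt = aeval A p := sqrt_eq_aeval hA p (fun i => hps _ (by
    simp only [hs, Finset.mem_insert, Finset.mem_union, Finset.mem_image]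
    exact Or.inr ⟨i, Finset.mem_univ i, rfl⟩))
  refine ⟨aeval A p.divX, ?_⟩
  have hX : Polynomial.X * p.divX = p := by
    have := Polynomial.X_mul_divX_add p
    rwa [h0, map_zero, add_zero] at this
  rw [hA']
  conv_lhs => rw [← hX]
  rw [_root_.map_mul, Polynomial.aeval_X]

end Aux

/-- `F(ΠρΠ, σ) = F(ρ, σ)` when `Π` projects onto the image of `σ`. -/
theorem stmt2 {m : ℕ} (ρ σ P : Matrix (Fin m) (Fin m) ℂ)
    (hρ : IsDensity ρ) (hσ : IsDensity σ)
    (hProj : P * P = P) (hHerm : Pᴴ = P)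
    (hRange : LinearMap.range (Matrix.toLin' P) = LinearMap.range (Matrix.toLin' σ)) :
    fidelity (P * ρ * P) σ = fidelity ρ σ := by
  obtain ⟨hρ1, _⟩ := hρ
  obtain ⟨hσ1, _⟩ := hσ
  have hPρP : (P * ρ * P).PosSemidef := by
    have := hρ1.conjTranspose_mul_mul_same P
    rwa [hHerm] at this
  -- √σ is absorbed by P
  obtain ⟨T, hT⟩ := sqrt_eq_mul hσ1
  have hfix : ∀ y : Fin m → ℂ, y ∈ LinearMap.range (Matrix.toLin' P) → P *ᵥ y = y := by
    rintro y ⟨z, rfl⟩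
    rw [Matrix.toLin'_apply, Matrix.mulVec_mulVec, hProj]
  have hPS : P * hσ1.sqrt = hσ1.sqrt := by
    apply Matrix.toLin'.injective
    apply LinearMap.ext
    intro x
    rw [Matrix.toLin'_apply, Matrix.toLin'_apply, ← Matrix.mulVec_mulVec]
    apply hfix
    rw [hRange, hT, ← Matrix.mulVec_mulVec]
    exact ⟨T *ᵥ x, Matrix.toLin'_apply σ (T *ᵥ x)⟩
  have hSP : hσ1.sqrt * P = hσ1.sqrt := by
    have := congrArg Matrix.conjTranspose hPS
    rwa [Matrix.conjTranspose_mul, hHerm, hσ1.posSemidef_sqrt.1.eq] at this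
  have hmσ : msqrt σ = hσ1.sqrt := dif_pos hσ1
  have key : msqrt σ * (P * ρ * P) * msqrt σ = msqrt σ * ρ * msqrt σ := by
    rw [hmσ]
    calc hσ1.sqrt * (P * ρ * P) * hσ1.sqrt
        = (hσ1.sqrt * P) * ρ * (P * hσ1.sqrt) := by simp only [Matrix.mul_assoc]
      _ = hσ1.sqrt * ρ * hσ1.sqrt := by rw [hSP, hPS]
  have swap1 := trace_msqrt_sandwich_comm hPρP hσ1
  have swap2 := trace_msqrt_sandwich_comm hρ1 hσ1
  unfold fidelity
  rw [show (msqrt (msqrt (P * ρ * P) * σ * msqrt (P * ρ * P))).trace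
      = (msqrt (msqrt ρ * σ * msqrt ρ)).trace from by
    rw [swap1, swap2, key]]


end QCAE
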